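/- The set of never-falling initial angles is relatively closed in (0, π): the set N := {φ ∈ (0, π) : A φ t ∈ (0, π) for all t ≥ 0} is closed in the subspace topology of the interval (0, π), i.e. (0, π) \ N is open. -/

import Mathlib

open Set Real Filter Metric
open scoped Topology NNReal

/-- `α` is a solution of the inverted-pendulum equation
`α'' t = -g * cos (α t) + u t * sin (α t)`. -/
def IsPendulumSolution (g : ℝ) (u : ℝ → ℝ) (α : ℝ → ℝ) : Prop :=
  ContDiff ℝ 2 α ∧
    ∀ t : ℝ, deriv (deriv α) t = -g * Real.cos (α t) + u t * Real.sin (α t)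

lemma contDiff_deriv' {α : ℝ → ℝ} (h : ContDiff ℝ 2 α) : ContDiff ℝ 1 (deriv α) := by
  have h2 : ContDiff ℝ (1 + 1 : ℕ) α := by exact_mod_cast h
  exact (contDiff_succ_iff_deriv.mp h2).2.2

lemma lipsin : LipschitzWith 1 Real.sin :=
  lipschitzWith_of_nnnorm_deriv_le Real.differentiable_sin (fun x => by
    rw [← NNReal.coe_le_coe, coe_nnnorm, NNReal.coe_one, Real.norm_eq_abs]
    simp [Real.deriv_sin, Real.abs_cos_le_one x])

lemma lipcos : LipschitzWith 1 Real.cos :=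
  lipschitzWith_of_nnnorm_deriv_le Real.differentiable_cos (fun x => by
    rw [← NNReal.coe_le_coe, coe_nnnorm, NNReal.coe_one, Real.norm_eq_abs]
    simp [Real.deriv_cos, Real.abs_sin_le_one x])

lemma cross_below {g : ℝ} (hg : 0 < g) {u α : ℝ → ℝ} (hu : Continuous u)
    (hα : IsPendulumSolution g u α) {t₀ : ℝ} (ht₀ : 0 < t₀) (h0 : α t₀ = 0) :
    ∃ t, 0 < t ∧ α t < 0 := by
  obtain ⟨hcd, hode⟩ := hα
  have hdiff : Differentiable ℝ α := hcd.differentiable (by norm_num)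
  have hd1 : ContDiff ℝ 1 (deriv α) := contDiff_deriv' hcd
  have hslope := hasDerivAt_iff_tendsto_slope.mp (hdiff t₀).hasDerivAt
  rcases lt_trichotomy (deriv α t₀) 0 with hd | hd | hd
  · -- derivative negative: α goes below just after t₀
    have hev : ∀ᶠ t in 𝓝[≠] t₀, slope α t₀ t < 0 :=
      hslope.eventually (Filter.Tendsto.eventually_lt_const hd tendsto_id)
    have hev' : ∀ᶠ t in 𝓝[>] t₀, slope α t₀ t < 0 :=
      hev.filter_mono (nhdsWithin_mono _ fun x hx => ne_of_gt hx)
    obtain ⟨t, hst, htgt⟩ := (hev'.and eventually_mem_nhdsWithin).exists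
    refine ⟨t, ht₀.trans htgt, ?_⟩
    rw [slope_def_field, h0, sub_zero] at hst
    have h1 : 0 < t - t₀ := by simp at htgt; linarith
    rcases div_neg_iff.mp hst with ⟨_, h⟩ | ⟨h, _⟩
    · linarith
    · linarith [h]
  · -- derivative zero: use α'' = -g < 0
    have hcont2 : Continuous (deriv (deriv α)) := by
      have : deriv (deriv α) = fun t => -g * Real.cos (α t) + u t * Real.sin (α t) :=
        funext hode
      rw [this]; fun_prop
    have hval : deriv (deriv α) t₀ = -g := by rw [hode, h0]; simp
    have hev : ∀ᶠ t in 𝓝 t₀, deriv (deriv α) t < 0 := by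
      have : deriv (deriv α) t₀ < 0 := by rw [hval]; linarith
      exact hcont2.continuousAt.eventually_lt continuousAt_const this
    obtain ⟨δ, hδ, hballneg⟩ := Metric.eventually_nhds_iff.mp hev
    set b := t₀ + δ / 2 with hb
    have hsub : Icc t₀ b ⊆ Metric.ball t₀ δ := by
      intro x hx
      rw [Metric.mem_ball, Real.dist_eq, abs_lt]
      constructor <;> [linarith [hx.1]; skip]
      have := hx.2; rw [hb] at this; linarith
    have hanti : StrictAntiOn (deriv α) (Icc t₀ b) := by
      apply strictAntiOn_of_deriv_neg (convex_Icc _ _) hd1.continuous.continuousOn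
      intro x hx
      rw [interior_Icc] at hx
      have h2 : x < t₀ + δ / 2 := hb ▸ hx.2
      exact hballneg (by rw [Real.dist_eq, abs_lt]; constructor <;> linarith [hx.1])
    have hbmem : b ∈ Icc t₀ b := ⟨by rw [hb]; linarith, le_rfl⟩
    have htmem : t₀ ∈ Icc t₀ b := ⟨le_rfl, by rw [hb]; linarith⟩
    have hderneg : ∀ x ∈ Ioo t₀ b, deriv α x < 0 := by
      intro x hx
      have := hanti htmem ⟨hx.1.le, hx.2.le⟩ hx.1
      rw [hd] at this; exact this
    have hanti2 : StrictAntiOn α (Icc t₀ b) := by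
      apply strictAntiOn_of_deriv_neg (convex_Icc _ _) hcd.continuous.continuousOn
      intro x hx; rw [interior_Icc] at hx; exact hderneg x hx
    have := hanti2 htmem hbmem (by rw [hb]; linarith)
    exact ⟨b, by rw [hb]; linarith, by rw [h0] at this; exact this⟩
  · -- derivative positive: α was below just before t₀
    have hev : ∀ᶠ t in 𝓝[≠] t₀, 0 < slope α t₀ t :=
      hslope.eventually (Filter.Tendsto.eventually_const_lt hd tendsto_id)
    have hev' : ∀ᶠ t in 𝓝[<] t₀, 0 < slope α t₀ t :=
      hev.filter_mono (nhdsWithin_mono _ fun x hx => ne_of_lt hx)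
    have hmem : ∀ᶠ t in 𝓝[<] t₀, t ∈ Ioo 0 t₀ :=
      eventually_of_mem (Ioo_mem_nhdsLT_of_mem ⟨ht₀, le_rfl⟩) fun x hx => hx
    obtain ⟨t, hst, htgt⟩ := (hev'.and hmem).exists
    refine ⟨t, htgt.1, ?_⟩
    rw [slope_def_field, h0, sub_zero] at hst
    have h1 : t - t₀ < 0 := by linarith [htgt.2]
    rcases div_pos_iff.mp hst with ⟨_, h⟩ | ⟨h, _⟩
    · linarith
    · linarith


lemma reflect {g : ℝ} {u α : ℝ → ℝ} (hα : IsPendulumSolution g u α) :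
    IsPendulumSolution g (fun t => -u t) (fun t => Real.pi - α t) := by
  obtain ⟨hcd, hode⟩ := hα
  refine ⟨contDiff_const.sub hcd, fun t => ?_⟩
  have h1 : deriv (fun t => Real.pi - α t) = fun t => -deriv α t := by
    funext s; rw [deriv_const_sub]
  rw [h1]
  have h2 : deriv (fun t => -deriv α t) t = -deriv (deriv α) t := deriv.neg
  rw [h2, hode, Real.cos_pi_sub, Real.sin_pi_sub]
  ring

lemma cont_dep {g : ℝ} (hg : 0 < g) {u : ℝ → ℝ} (hu : Continuous u)
    {T : ℝ} (hT : 0 < T) :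
    ∃ C > 0, ∀ α β : ℝ → ℝ, IsPendulumSolution g u α → IsPendulumSolution g u β →
      deriv α 0 = 0 → deriv β 0 = 0 →
      |α T - β T| ≤ C * |α 0 - β 0| := by
  classical
  set uc : ℝ → ℝ := fun t => u (max 0 (min t T)) with huc
  obtain ⟨M, hM⟩ := (isCompact_Icc (a := (0:ℝ)) (b := T)).exists_bound_of_continuousOn
    hu.continuousOn
  have hMc : ∀ t, |uc t| ≤ max M 0 := by
    intro t
    have hmem : max 0 (min t T) ∈ Icc 0 T :=
      ⟨le_max_left _ _, max_le hT.le (min_le_right _ _)⟩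
    calc |uc t| ≤ M := by simpa [Real.norm_eq_abs] using hM _ hmem
      _ ≤ max M 0 := le_max_left _ _
  set Kr : ℝ := 1 + g + max M 0 with hKr
  have hKrpos : 0 < Kr := by positivity
  set K : ℝ≥0 := ⟨Kr, hKrpos.le⟩ with hK
  have hKcoe : (K : ℝ) = Kr := rfl
  set v : ℝ → ℝ × ℝ → ℝ × ℝ :=
    fun t p => (p.2, -g * Real.cos p.1 + uc t * Real.sin p.1) with hv
  have hlip : ∀ t, LipschitzWith K (v t) := by
    intro t
    apply LipschitzWith.of_dist_le_mul
    intro p q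
    rw [Prod.dist_eq]
    have hd1 : dist p.1 q.1 ≤ dist p q := by rw [Prod.dist_eq]; exact le_max_left _ _
    have hd2 : dist p.2 q.2 ≤ dist p q := by rw [Prod.dist_eq]; exact le_max_right _ _
    have hdn : (0:ℝ) ≤ dist p q := dist_nonneg
    apply max_le
    · calc dist p.2 q.2 ≤ dist p q := hd2
        _ ≤ K * dist p q := by rw [hKcoe]; nlinarith [hMc t, abs_nonneg (uc t)]
    · have hcos : |Real.cos p.1 - Real.cos q.1| ≤ |p.1 - q.1| := by
        have := lipcos.dist_le_mul p.1 q.1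
        simpa [Real.dist_eq] using this
      have hsin : |Real.sin p.1 - Real.sin q.1| ≤ |p.1 - q.1| := by
        have := lipsin.dist_le_mul p.1 q.1
        simpa [Real.dist_eq] using this
      have h1 : (-g * Real.cos p.1 + uc t * Real.sin p.1) -
          (-g * Real.cos q.1 + uc t * Real.sin q.1) =
          (-g) * (Real.cos p.1 - Real.cos q.1) + uc t * (Real.sin p.1 - Real.sin q.1) := by
        ring
      rw [Real.dist_eq, h1, hKcoe]
      have habs : |(-g) * (Real.cos p.1 - Real.cos q.1) + uc t * (Real.sin p.1 - Real.sin q.1)|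
          ≤ g * |Real.cos p.1 - Real.cos q.1| + |uc t| * |Real.sin p.1 - Real.sin q.1| := by
        calc _ ≤ |(-g) * (Real.cos p.1 - Real.cos q.1)| +
              |uc t * (Real.sin p.1 - Real.sin q.1)| := abs_add_le _ _
          _ = g * |Real.cos p.1 - Real.cos q.1| + |uc t| * |Real.sin p.1 - Real.sin q.1| := by
              rw [abs_mul, abs_mul, abs_neg, abs_of_pos hg]
      have hfd : |p.1 - q.1| ≤ dist p q := by rw [← Real.dist_eq]; exact hd1
      nlinarith [hMc t, abs_nonneg (uc t), abs_nonneg (Real.cos p.1 - Real.cos q.1),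
        abs_nonneg (Real.sin p.1 - Real.sin q.1), abs_nonneg (p.1 - q.1)]
  refine ⟨Real.exp (Kr * T), Real.exp_pos _, ?_⟩
  intro α β hα hβ hα0 hβ0
  obtain ⟨hαcd, hαode⟩ := hα
  obtain ⟨hβcd, hβode⟩ := hβ
  set F : (ℝ → ℝ) → ℝ → ℝ × ℝ := fun γ t => (γ t, deriv γ t) with hF
  have hFc : ∀ γ : ℝ → ℝ, ContDiff ℝ 2 γ → ContinuousOn (F γ) (Icc 0 T) := fun γ hγ =>
    (hγ.continuous.prodMk (contDiff_deriv' hγ).continuous).continuousOn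
  have hF' : ∀ (γ : ℝ → ℝ), ContDiff ℝ 2 γ →
      (∀ s : ℝ, deriv (deriv γ) s = -g * Real.cos (γ s) + u s * Real.sin (γ s)) →
      ∀ t ∈ Ico 0 T, HasDerivWithinAt (F γ) (v t (F γ t)) (Ici t) t := by
    intro γ hγ hode t ht
    have hda : HasDerivAt γ (deriv γ t) t :=
      ((hγ.differentiable (by norm_num)) t).hasDerivAt
    have hdd : HasDerivAt (deriv γ) (deriv (deriv γ) t) t :=
      (((contDiff_deriv' hγ).differentiable one_ne_zero) t).hasDerivAt
    have hprod := hda.prodMk hdd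
    have hveq : v t (F γ t) = (deriv γ t, deriv (deriv γ) t) := by
      have huct : uc t = u t := by
        show u (max 0 (min t T)) = u t
        rw [min_eq_left ht.2.le, max_eq_right ht.1]
      rw [hv, hF]
      simp only
      rw [huct, hode t]
    rw [hveq]
    exact hprod.hasDerivWithinAt
  have ha : dist (F α 0) (F β 0) ≤ |α 0 - β 0| := by
    rw [hF]; simp only
    rw [Prod.dist_eq, hα0, hβ0, dist_self, Real.dist_eq]
    exact max_le le_rfl (abs_nonneg _)
  have key := dist_le_of_trajectories_ODE hlip (hFc α hαcd) (hF' α hαcd hαode)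
    (hFc β hβcd) (hF' β hβcd hβode) ha T ⟨hT.le, le_rfl⟩
  have hfst : |α T - β T| ≤ dist (F α T) (F β T) := by
    rw [← Real.dist_eq]
    have : dist (F α T) (F β T) = max (dist (α T) (β T)) (dist (deriv α T) (deriv β T)) :=
      Prod.dist_eq
    rw [this]; exact le_max_left _ _
  calc |α T - β T| ≤ dist (F α T) (F β T) := hfst
    _ ≤ |α 0 - β 0| * Real.exp (K * (T - 0)) := key
    _ = Real.exp (Kr * T) * |α 0 - β 0| := by rw [hKcoe, sub_zero, mul_comm]

lemma cross_above {g : ℝ} (hg : 0 < g) {u α : ℝ → ℝ} (hu : Continuous u)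
    (hα : IsPendulumSolution g u α) {t₀ : ℝ} (ht₀ : 0 < t₀) (h0 : α t₀ = Real.pi) :
    ∃ t, 0 < t ∧ Real.pi < α t := by
  obtain ⟨t, ht, hlt⟩ := cross_below hg hu.neg (reflect hα) ht₀ (by simp [h0])
  exact ⟨t, ht, by linarith⟩

/-- The set `N` of never-falling initial angles is relatively closed in
`(0, π)`: its complement within `(0, π)` is open. -/
theorem pendulum_neverfall_set_relatively_closed (g : ℝ) (hg : 0 < g)
    (u : ℝ → ℝ) (hu : Continuous u) (A : ℝ → ℝ → ℝ)
    (hA : ∀ φ : ℝ, IsPendulumSolution g u (A φ) ∧ A φ 0 = φ ∧ deriv (A φ) 0 = 0) :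
    IsOpen (Set.Ioo (0 : ℝ) Real.pi \
      {φ : ℝ | φ ∈ Set.Ioo (0 : ℝ) Real.pi ∧
        ∀ t : ℝ, 0 ≤ t → A φ t ∈ Set.Ioo (0 : ℝ) Real.pi}) := by
  rw [Metric.isOpen_iff]
  rintro φ₀ ⟨hφIoo, hnot⟩
  have h2 : ¬ ∀ t : ℝ, 0 ≤ t → A φ₀ t ∈ Set.Ioo (0 : ℝ) Real.pi :=
    fun h => hnot ⟨hφIoo, h⟩
  push_neg at h2
  obtain ⟨t₀, ht₀, hout⟩ := h2
  have ht₀pos : 0 < t₀ := by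
    rcases ht₀.lt_or_eq with h | h
    · exact h
    · exact absurd (by rw [← h, (hA φ₀).2.1]; exact hφIoo) hout
  obtain ⟨t₁, ht₁pos, hcase⟩ : ∃ t₁, 0 < t₁ ∧ (A φ₀ t₁ < 0 ∨ Real.pi < A φ₀ t₁) := by
    rw [Set.mem_Ioo, not_and_or, not_lt, not_lt] at hout
    rcases hout with h | h
    · rcases h.lt_or_eq with h' | h'
      · exact ⟨t₀, ht₀pos, Or.inl h'⟩
      · obtain ⟨t, ht, hlt⟩ := cross_below hg hu (hA φ₀).1 ht₀pos h'
        exact ⟨t, ht, Or.inl hlt⟩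
    · rcases h.lt_or_eq with h' | h'
      · exact ⟨t₀, ht₀pos, Or.inr h'⟩
      · obtain ⟨t, ht, hlt⟩ := cross_above hg hu (hA φ₀).1 ht₀pos h'.symm
        exact ⟨t, ht, Or.inr hlt⟩
  obtain ⟨C, hC, hCd⟩ := cont_dep hg hu ht₁pos
  obtain ⟨ε, hε, hεimp⟩ :
      ∃ ε > 0, ∀ y : ℝ, |y - A φ₀ t₁| < ε → y ∉ Set.Ioo (0 : ℝ) Real.pi := by
    rcases hcase with h | h
    · refine ⟨-A φ₀ t₁, by linarith, fun y hy hyI => ?_⟩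
      rw [abs_lt] at hy
      exact absurd hyI.1 (by linarith [hy.1])
    · refine ⟨A φ₀ t₁ - Real.pi, by linarith, fun y hy hyI => ?_⟩
      rw [abs_lt] at hy
      exact absurd hyI.2 (by push_neg; linarith [hy.1])
  obtain ⟨δ₁, hδ₁, hball⟩ := Metric.isOpen_iff.mp isOpen_Ioo φ₀ hφIoo
  refine ⟨min δ₁ (ε / C), by positivity, ?_⟩
  intro φ hφ
  rw [Metric.mem_ball, Real.dist_eq] at hφ
  have hφI : φ ∈ Set.Ioo (0 : ℝ) Real.pi := by
    apply hball
    rw [Metric.mem_ball, Real.dist_eq]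
    exact hφ.trans_le (min_le_left _ _)
  refine ⟨hφI, fun hmem => ?_⟩
  obtain ⟨-, hall⟩ := hmem
  have hin := hall t₁ ht₁pos.le
  have hdep := hCd (A φ) (A φ₀) (hA φ).1 (hA φ₀).1 (hA φ).2.2 (hA φ₀).2.2
  rw [(hA φ).2.1, (hA φ₀).2.1] at hdep
  have hlt : |A φ t₁ - A φ₀ t₁| < ε := by
    have h1 : |φ - φ₀| < ε / C := hφ.trans_le (min_le_right _ _)
    calc |A φ t₁ - A φ₀ t₁| ≤ C * |φ - φ₀| := hdep
      _ < C * (ε / C) := by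
        apply mul_lt_mul_of_pos_left h1 hC
      _ = ε := by field_simp
  exact hεimp _ hlt hin
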